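/- Let ℓ₁,…,ℓₙ : ℝ → ℝ be nonnegative convex differentiable functions with (ℓᵢ'(u))² ≤ ρ²·ℓᵢ(u) for all u ∈ ℝ and all i, where ρ ≥ 0. Let m ≥ 1 and n ≥ 1 be integers, let c > 0, set γ = n·ρ²/c, and assume m·γ ≤ 1. Let a, w₂, …, w_m ∈ ℝⁿ, set s = a + Σ_{j=2}^m w_j, and let r̄ ≥ 0 be a real number. Then r̄ + (1/n)·Σ_{i=1}^n ℓᵢ(aᵢ) − (1/c)·Σ_{i=1}^n (ℓᵢ'(aᵢ))² + (c/(4n²))·Σ_{j=2}^m ‖w_j‖₂² ≥ (1 − m·γ)·( (1/n)·Σ_{i=1}^n ℓᵢ(sᵢ) + r̄ ). -/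

import Mathlib

open Finset

-- sqrt-Lipschitz lemma
lemma sqrtLip (f : ℝ → ℝ) (hnn : ∀ u, 0 ≤ f u) (hd : Differentiable ℝ f)
    (ρ : ℝ) (hρ : 0 ≤ ρ) (h : ∀ u, (deriv f u) ^ 2 ≤ ρ ^ 2 * f u) (x y : ℝ) :
    Real.sqrt (f y) ≤ Real.sqrt (f x) + ρ / 2 * |y - x| := by
  have key : ∀ ε : ℝ, 0 < ε →
      Real.sqrt (f y + ε) ≤ Real.sqrt (f x + ε) + ρ / 2 * |y - x| := by
    intro ε hε
    set g : ℝ → ℝ := fun u => Real.sqrt (f u + ε) with hg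
    have hder : ∀ u : ℝ, HasDerivAt g (deriv f u / (2 * Real.sqrt (f u + ε))) u := by
      intro u
      have h1 : HasDerivAt (fun v => f v + ε) (deriv f u) u :=
        ((hd u).hasDerivAt).add_const ε
      have hfu := hnn u
      have hpos : f u + ε ≠ 0 := by positivity
      have h2 := (Real.hasDerivAt_sqrt hpos).comp u h1
      rw [show deriv f u / (2 * Real.sqrt (f u + ε)) = 1 / (2 * Real.sqrt (f u + ε)) * deriv f u by ring]
      exact h2
    have hbound : ∀ u : ℝ, ‖deriv f u / (2 * Real.sqrt (f u + ε))‖ ≤ ρ / 2 := by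
      intro u
      have hfu := hnn u
      have hsq : 0 < Real.sqrt (f u + ε) := Real.sqrt_pos.2 (by positivity)
      rw [Real.norm_eq_abs, abs_div, abs_of_pos (by positivity : (0:ℝ) < 2 * Real.sqrt (f u + ε))]
      rw [div_le_div_iff₀ (by positivity) (by norm_num)]
      have h1 : |deriv f u| ≤ ρ * Real.sqrt (f u + ε) := by
        have : (deriv f u) ^ 2 ≤ (ρ * Real.sqrt (f u + ε)) ^ 2 := by
          rw [mul_pow, Real.sq_sqrt (by positivity)]
          calc (deriv f u) ^ 2 ≤ ρ ^ 2 * f u := h u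
            _ ≤ ρ ^ 2 * (f u + ε) := by nlinarith [sq_nonneg ρ]
        exact abs_le.2 (abs_le_of_sq_le_sq' this (by positivity))
      nlinarith [hsq.le]
    have := Convex.norm_image_sub_le_of_norm_hasDerivWithin_le
      (f' := fun u => deriv f u / (2 * Real.sqrt (f u + ε)))
      (fun u _ => (hder u).hasDerivWithinAt) (fun u _ => hbound u) convex_univ
      (Set.mem_univ x) (Set.mem_univ y)
    rw [Real.norm_eq_abs, Real.norm_eq_abs] at this
    have h3 : g y - g x ≤ ρ / 2 * |y - x| := le_trans (le_abs_self _) this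
    linarith [h3]
  refine le_of_forall_pos_le_add fun δ hδ => ?_
  have h1 := key (δ ^ 2) (by positivity)
  have h2 : Real.sqrt (f y) ≤ Real.sqrt (f y + δ ^ 2) :=
    Real.sqrt_le_sqrt (by nlinarith)
  have h3 : Real.sqrt (f x + δ ^ 2) ≤ Real.sqrt (f x) + δ := by
    have hb : f x + δ ^ 2 ≤ (Real.sqrt (f x) + δ) ^ 2 := by
      nlinarith [Real.sq_sqrt (hnn x), Real.sqrt_nonneg (f x)]
    calc Real.sqrt (f x + δ ^ 2) ≤ Real.sqrt ((Real.sqrt (f x) + δ) ^ 2) := Real.sqrt_le_sqrt hb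
      _ = Real.sqrt (f x) + δ := Real.sqrt_sq (by positivity)
  linarith

set_option maxHeartbeats 1000000 in
lemma key2 {N M c γ ρ u v W S g A : ℝ} (hN : 1 ≤ N) (hM : 1 ≤ M) (hc : 0 < c) (hρ : 0 ≤ ρ)
    (hγc : γ * c = N * ρ ^ 2) (hγ0 : 0 ≤ γ) (hmγ : M * γ ≤ 1)
    (hu : 0 ≤ u) (hv : 0 ≤ v) (hW : 0 ≤ W) (hS : 0 ≤ S) (hA : 0 ≤ A) (hAu : A = u ^ 2)
    (hv2 : v ^ 2 ≤ (M - 1) * W) (hQ : S ≤ (u + ρ / 2 * v) ^ 2) (hg : g ^ 2 ≤ ρ ^ 2 * A) :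
    (1 - M * γ) * (4 * N * c * S) ≤ 4 * N * c * A - 4 * N ^ 2 * g ^ 2 + c ^ 2 * W := by
  have ht0 : 0 ≤ 1 - M * γ := by linarith
  have hγ1 : γ ≤ 1 := by nlinarith
  have hg2 : 4 * N ^ 2 * g ^ 2 ≤ 4 * N * γ * c * A := by
    have e : 4 * N * γ * c * A = 4 * N ^ 2 * ρ ^ 2 * A := by linear_combination 4 * N * A * hγc
    rw [e]
    nlinarith [mul_le_mul_of_nonneg_left hg (by positivity : (0:ℝ) ≤ 4 * N ^ 2)]
  have main : (1 - M * γ) * (4 * N * c * S) ≤ 4 * N * c * A - 4 * N * γ * c * A + c ^ 2 * W := by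
    rcases eq_or_lt_of_le hγ0 with hγz | hγpos
    · -- γ = 0, hence ρ = 0
      have hρ0 : ρ = 0 := by nlinarith [sq_nonneg ρ]
      have hSu : S ≤ u ^ 2 := by rw [hρ0] at hQ; nlinarith [hQ]
      rw [← hγz, hAu]
      have h4 : (0:ℝ) ≤ 4 * N * c := by positivity
      nlinarith [mul_nonneg (sq_nonneg c) hW, mul_le_mul_of_nonneg_left hSu h4]
    · rcases eq_or_lt_of_le hM with hM1 | hM2
      · -- M = 1
        have hv0 : v = 0 := by nlinarith [sq_nonneg v]
        have hSu : S ≤ u ^ 2 := by rw [hv0] at hQ; nlinarith [hQ]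
        rw [← hM1, hAu]
        have h4 : (0:ℝ) ≤ (1 - γ) * (4 * N * c) := by
          have : 0 ≤ 1 - γ := by linarith
          positivity
        nlinarith [mul_nonneg (sq_nonneg c) hW, mul_le_mul_of_nonneg_left hSu h4]
      · -- main case: M > 1, γ > 0
        have hfac : 0 < (M - 1) * γ := mul_pos (by linarith) hγpos
        have hsuff : (M - 1) * γ * ((1 - M * γ) * (4 * N * c * S)) ≤
            (M - 1) * γ * (4 * N * c * A - 4 * N * γ * c * A + c ^ 2 * W) := by
          have h1 : (1 - M * γ) * (4 * N * c * S) ≤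
              (1 - M * γ) * (4 * N * c * (u + ρ / 2 * v) ^ 2) := by
            exact mul_le_mul_of_nonneg_left
              (mul_le_mul_of_nonneg_left hQ (by positivity : (0:ℝ) ≤ 4 * N * c)) ht0
          have h2 : (M - 1) * γ * ((1 - M * γ) * (4 * N * c * S)) ≤
              (M - 1) * γ * ((1 - M * γ) * (4 * N * c * (u + ρ / 2 * v) ^ 2)) :=
            mul_le_mul_of_nonneg_left h1 hfac.le
          refine h2.trans ?_
          rw [hAu]
          have hsq : 0 ≤ N * c * (2 * (M - 1) * γ * u - (1 - M * γ) * ρ * v) ^ 2 := by positivity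
          have ht1 : (1 - M * γ) * (1 - γ) ≤ 1 := by nlinarith
          have hgc2 : (0:ℝ) ≤ γ * c ^ 2 := by positivity
          have hE1 : N * c * (1 - M * γ) ^ 2 * ρ ^ 2 * v ^ 2
              = γ * c ^ 2 * (1 - M * γ) ^ 2 * v ^ 2 := by
            linear_combination (-(c * (1 - M * γ) ^ 2 * v ^ 2)) * hγc
          have hE2 : N * c * (M - 1) * γ * (1 - M * γ) * ρ ^ 2 * v ^ 2
              = (M - 1) * γ ^ 2 * c ^ 2 * (1 - M * γ) * v ^ 2 := by
            linear_combination (-(c * (M - 1) * γ * (1 - M * γ) * v ^ 2)) * hγc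
          have h5 : γ * c ^ 2 * ((1 - M * γ) * (1 - γ)) * v ^ 2 ≤ γ * c ^ 2 * v ^ 2 :=
            mul_le_mul_of_nonneg_right
              (by calc γ * c ^ 2 * ((1 - M * γ) * (1 - γ)) ≤ γ * c ^ 2 * 1 :=
                    mul_le_mul_of_nonneg_left ht1 hgc2
                _ = γ * c ^ 2 := by ring) (sq_nonneg v)
          have h6 : γ * c ^ 2 * v ^ 2 ≤ γ * c ^ 2 * ((M - 1) * W) :=
            mul_le_mul_of_nonneg_left hv2 hgc2
          nlinarith [hsq, hE1, hE2, h5, h6]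
        exact le_of_mul_le_mul_left hsuff hfac
  linarith

/-- Lower bound for square-root-Lipschitz losses: if each `ℓᵢ` is nonnegative, convex,
differentiable with `ℓᵢ'(u)² ≤ ρ²·ℓᵢ(u)`, `c > 0`, `γ = nρ²/c`, `mγ ≤ 1`, `r̄ ≥ 0`, and
`s = a + Σ_{j=2}^m w_j`, then
`r̄ + (1/n)·Σᵢ ℓᵢ(aᵢ) − (1/c)·Σᵢ ℓᵢ'(aᵢ)² + (c/(4n²))·Σ_{j=2}^m ‖w_j‖₂²
  ≥ (1 − mγ)·((1/n)·Σᵢ ℓᵢ(sᵢ) + r̄)`. -/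
theorem stmt_6 {n m : ℕ} [NeZero m] (hm : 1 ≤ m) (hn : 1 ≤ n)
    (ℓ : Fin n → ℝ → ℝ)
    (hnonneg : ∀ i u, 0 ≤ ℓ i u)
    (hconv : ∀ i, ConvexOn ℝ Set.univ (ℓ i))
    (hdiff : ∀ i, Differentiable ℝ (ℓ i))
    (ρ : ℝ) (hρ : 0 ≤ ρ)
    (hsqlip : ∀ i u, (deriv (ℓ i) u) ^ 2 ≤ ρ ^ 2 * ℓ i u)
    (c : ℝ) (hc : 0 < c)
    (γ : ℝ) (hγ : γ = (n : ℝ) * ρ ^ 2 / c) (hmγ : (m : ℝ) * γ ≤ 1)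
    (a : Fin n → ℝ) (w : Fin m → Fin n → ℝ)
    (s : Fin n → ℝ) (hs : ∀ i, s i = a i + ∑ j ∈ Finset.univ.erase 0, w j i)
    (rbar : ℝ) (hrbar : 0 ≤ rbar) :
    rbar + (1 / (n : ℝ)) * ∑ i, ℓ i (a i) - (1 / c) * ∑ i, (deriv (ℓ i) (a i)) ^ 2
        + (c / (4 * (n : ℝ) ^ 2)) * ∑ j ∈ Finset.univ.erase 0, (∑ i, (w j i) ^ 2)
      ≥ (1 - (m : ℝ) * γ) * ((1 / (n : ℝ)) * ∑ i, ℓ i (s i) + rbar) := by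
  set N : ℝ := (n : ℝ) with hNdef
  set M : ℝ := (m : ℝ) with hMdef
  have hN : (1:ℝ) ≤ N := by rw [hNdef]; exact_mod_cast hn
  have hM : (1:ℝ) ≤ M := by rw [hMdef]; exact_mod_cast hm
  have hN0 : N ≠ 0 := by linarith
  have hc0 : c ≠ 0 := ne_of_gt hc
  have hγ0 : 0 ≤ γ := by rw [hγ]; positivity
  have hγc : γ * c = N * ρ ^ 2 := by rw [hγ]; field_simp
  set E := (Finset.univ.erase (0 : Fin m)) with hE
  have hcardE : (E.card : ℝ) = M - 1 := by
    rw [hE, Finset.card_erase_of_mem (Finset.mem_univ _), Finset.card_univ, Fintype.card_fin]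
    push_cast [hm]
    ring
  set A : Fin n → ℝ := fun i => ℓ i (a i) with hA
  set S : Fin n → ℝ := fun i => ℓ i (s i) with hS
  set g : Fin n → ℝ := fun i => deriv (ℓ i) (a i) with hg
  set W : Fin n → ℝ := fun i => ∑ j ∈ E, (w j i) ^ 2 with hW
  have key : ∀ i, (1 - M * γ) * (4 * N * c * S i)
      ≤ 4 * N * c * A i - 4 * N ^ 2 * (g i) ^ 2 + c ^ 2 * W i := by
    intro i
    have hQ : S i ≤ (Real.sqrt (A i) + ρ / 2 * |s i - a i|) ^ 2 := by
      have h1 := sqrtLip (ℓ i) (hnonneg i) (hdiff i) ρ hρ (hsqlip i) (a i) (s i)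
      calc S i = (Real.sqrt (S i)) ^ 2 := (Real.sq_sqrt (hnonneg i (s i))).symm
        _ ≤ (Real.sqrt (A i) + ρ / 2 * |s i - a i|) ^ 2 :=
          pow_le_pow_left₀ (Real.sqrt_nonneg _) h1 2
    have hv2 : |s i - a i| ^ 2 ≤ (M - 1) * W i := by
      rw [sq_abs]
      have hd : s i - a i = ∑ j ∈ E, w j i := by rw [hs i]; ring
      rw [hd]
      calc (∑ j ∈ E, w j i) ^ 2 ≤ (E.card : ℝ) * ∑ j ∈ E, (w j i) ^ 2 :=
        sq_sum_le_card_mul_sum_sq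
        _ = (M - 1) * W i := by rw [hcardE]
    exact key2 hN hM hc hρ hγc hγ0 hmγ (Real.sqrt_nonneg _) (abs_nonneg _)
      (Finset.sum_nonneg fun j _ => sq_nonneg _) (hnonneg i (s i)) (hnonneg i (a i))
      (Real.sq_sqrt (hnonneg i (a i))).symm hv2 hQ (hsqlip i (a i))
  have hKsum : (1 - M * γ) * (4 * N * c * ∑ i, S i)
      ≤ 4 * N * c * (∑ i, A i) - 4 * N ^ 2 * (∑ i, (g i) ^ 2) + c ^ 2 * (∑ i, W i) := by
    have := Finset.sum_le_sum (fun i (_ : i ∈ Finset.univ) => key i)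
    calc (1 - M * γ) * (4 * N * c * ∑ i, S i)
        = ∑ i, (1 - M * γ) * (4 * N * c * S i) := by
          rw [Finset.mul_sum, Finset.mul_sum]
      _ ≤ ∑ i, (4 * N * c * A i - 4 * N ^ 2 * (g i) ^ 2 + c ^ 2 * W i) := this
      _ = 4 * N * c * (∑ i, A i) - 4 * N ^ 2 * (∑ i, (g i) ^ 2) + c ^ 2 * (∑ i, W i) := by
          rw [Finset.sum_add_distrib, Finset.sum_sub_distrib, Finset.mul_sum, Finset.mul_sum,
            Finset.mul_sum]
  have hswap : ∑ j ∈ E, (∑ i, (w j i) ^ 2) = ∑ i, W i := Finset.sum_comm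
  rw [ge_iff_le, ← sub_nonneg, hswap]
  have hD : rbar + 1 / N * ∑ i, A i - 1 / c * ∑ i, (g i) ^ 2 + c / (4 * N ^ 2) * ∑ i, W i
      - (1 - M * γ) * (1 / N * ∑ i, S i + rbar)
      = 1 / (4 * N ^ 2 * c) * ((4 * N * c * (∑ i, A i) - 4 * N ^ 2 * (∑ i, (g i) ^ 2)
          + c ^ 2 * (∑ i, W i)) - (1 - M * γ) * (4 * N * c * ∑ i, S i)) + M * γ * rbar := by
    field_simp
    ring
  rw [hD]
  have h1 : (0:ℝ) ≤ 1 / (4 * N ^ 2 * c) := by positivity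
  have h2 : (0:ℝ) ≤ M * γ * rbar := by positivity
  nlinarith [mul_le_mul_of_nonneg_left hKsum h1]
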